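/- Let P = F₂^{2n} carry the standard non-degenerate symplectic form, let the n coordinates be partitioned into two disjoint sets A and B, and for a subspace G ≤ P let G_A = G ∩ P_A denote the subspace of G supported on A (similarly G_B). Then there exists a subspace G' ≤ G with G = G_A ⊕ G_B ⊕ G', and the orthogonal complement satisfies dim_{F₂}((G^⊥)_A) = 2|A| − dim G_A − dim G' and dim_{F₂}((G^⊥)_B) = 2|B| − dim G_B − dim G'. -/

import Mathlib

/-- The `n`-qubit Pauli space `P = F₂ⁿ × F₂ⁿ`. -/
abbrev PauliSpace (n : ℕ) := (Fin n → ZMod 2) × (Fin n → ZMod 2)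

/-- The standard symplectic form `λ((a,b),(c,d)) = a·d + b·c` on `PauliSpace n`. -/
def sympForm {n : ℕ} (p q : PauliSpace n) : ZMod 2 :=
  dotProduct p.1 q.2 + dotProduct p.2 q.1

/-- The orthogonal complement `G^⊥ = {x : λ(x,g) = 0 for all g ∈ G}`. -/
def sympOrtho {n : ℕ} (G : Submodule (ZMod 2) (PauliSpace n)) :
    Submodule (ZMod 2) (PauliSpace n) where
  carrier := {x | ∀ g ∈ G, sympForm x g = 0}
  add_mem' := by
    intro a b ha hb g hg
    have h : sympForm (a + b) g = sympForm a g + sympForm b g := by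
      simp only [sympForm, Prod.fst_add, Prod.snd_add, add_dotProduct]
      ring
    rw [h, ha g hg, hb g hg, add_zero]
  zero_mem' := by
    intro g hg
    simp [sympForm]
  smul_mem' := by
    intro c a ha g hg
    have h : sympForm (c • a) g = c * sympForm a g := by
      simp only [sympForm, Prod.smul_fst, Prod.smul_snd, smul_dotProduct,
        smul_eq_mul]
      ring
    rw [h, ha g hg, mul_zero]

/-- `P_A`: the subspace of Pauli vectors supported on the coordinate set `A`. -/
def suppIn {n : ℕ} (A : Finset (Fin n)) : Submodule (ZMod 2) (PauliSpace n) where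
  carrier := {p | ∀ i, i ∉ A → p.1 i = 0 ∧ p.2 i = 0}
  add_mem' := by
    intro a b ha hb i hi
    obtain ⟨h1, h2⟩ := ha i hi
    obtain ⟨h3, h4⟩ := hb i hi
    constructor <;> simp [h1, h2, h3, h4]
  zero_mem' := by intro i _; simp
  smul_mem' := by
    intro c a ha i hi
    obtain ⟨h1, h2⟩ := ha i hi
    constructor <;> simp [h1, h2]

/-- If the `n` coordinates are partitioned into `A` and `B`, then any subspace `G` of the
Pauli space decomposes as `G = G_A ⊕ G_B ⊕ G'` for some `G'`, and
`dim (G^⊥)_A = 2|A| − dim G_A − dim G'`, `dim (G^⊥)_B = 2|B| − dim G_B − dim G'`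
(stated additively). -/
-- auxiliary lemmas

noncomputable def sympB (n : ℕ) : LinearMap.BilinForm (ZMod 2) (PauliSpace n) :=
  LinearMap.mk₂ (ZMod 2) sympForm
    (by intro a b c; simp [sympForm, add_dotProduct]; ring)
    (by intro a b c; simp [sympForm, smul_dotProduct]; ring)
    (by intro a b c; simp [sympForm, dotProduct_add]; ring)
    (by intro a b c; simp [sympForm, dotProduct_smul]; ring)

@[simp] lemma sympB_apply {n : ℕ} (p q : PauliSpace n) : sympB n p q = sympForm p q := rfl

lemma sympForm_symm {n : ℕ} (p q : PauliSpace n) : sympForm p q = sympForm q p := by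
  simp only [sympForm]
  rw [dotProduct_comm p.1 q.2, dotProduct_comm p.2 q.1, add_comm]

lemma sympB_isRefl {n : ℕ} : (sympB n).IsRefl := by
  intro x y h
  simpa [sympForm_symm y x] using h

lemma sympB_nondeg {n : ℕ} : (sympB n).Nondegenerate := by
  refine (LinearMap.IsRefl.nondegenerate_iff_separatingLeft sympB_isRefl).mpr ?_
  intro m h
  ext i
  · have := h (0, Pi.single i 1)
    simpa [sympForm, dotProduct_single] using this
  · have := h (Pi.single i 1, 0)
    simpa [sympForm, dotProduct_single] using this

lemma mem_sympOrtho_iff {n : ℕ} {G : Submodule (ZMod 2) (PauliSpace n)}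
    {x : PauliSpace n} : x ∈ sympOrtho G ↔ ∀ g ∈ G, sympForm x g = 0 := Iff.rfl

lemma sympOrtho_eq {n : ℕ} (G : Submodule (ZMod 2) (PauliSpace n)) :
    sympOrtho G = (sympB n).orthogonal G := by
  ext x
  simp only [mem_sympOrtho_iff, LinearMap.BilinForm.mem_orthogonal_iff,
    LinearMap.IsOrtho, sympB_apply]
  constructor
  · intro h g hg
    show sympForm g x = 0
    rw [sympForm_symm]; exact h g hg
  · intro h g hg
    have : sympForm g x = 0 := h g hg
    rw [sympForm_symm]; exact this

lemma finrank_pauli (n : ℕ) :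
    Module.finrank (ZMod 2) (PauliSpace n) = 2 * n := by
  simp [Module.finrank_prod, Module.finrank_pi]
  ring

lemma finrank_add_finrank_sympOrtho {n : ℕ} (W : Submodule (ZMod 2) (PauliSpace n)) :
    Module.finrank (ZMod 2) W + Module.finrank (ZMod 2) (sympOrtho W) = 2 * n := by
  rw [sympOrtho_eq,
    LinearMap.BilinForm.finrank_add_finrank_orthogonal sympB_isRefl W,
    LinearMap.BilinForm.orthogonal_top_eq_bot sympB_nondeg, inf_bot_eq,
    finrank_bot, add_zero, finrank_pauli]

lemma sympOrtho_sup {n : ℕ} (G H : Submodule (ZMod 2) (PauliSpace n)) :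
    sympOrtho (G ⊔ H) = sympOrtho G ⊓ sympOrtho H := by
  apply le_antisymm
  · intro x hx
    exact ⟨fun g hg => hx g (Submodule.mem_sup_left hg),
      fun h hh => hx h (Submodule.mem_sup_right hh)⟩
  · rintro x ⟨hxG, hxH⟩ g hg
    obtain ⟨y, hy, z, hz, rfl⟩ := Submodule.mem_sup.mp hg
    have : sympForm x (y + z) = sympForm x y + sympForm x z := by
      simpa using map_add (sympB n x) y z
    rw [this, hxG y hy, hxH z hz, add_zero]

noncomputable def suppInEquiv {n : ℕ} (S : Finset (Fin n)) :
    suppIn S ≃ₗ[ZMod 2] ((S → ZMod 2) × (S → ZMod 2)) where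
  toFun p := (fun i => p.1.1 i, fun i => p.1.2 i)
  map_add' p q := rfl
  map_smul' c p := rfl
  invFun q := ⟨(fun i => if h : i ∈ S then q.1 ⟨i, h⟩ else 0,
               fun i => if h : i ∈ S then q.2 ⟨i, h⟩ else 0), by
    intro i hi
    simp [hi]⟩
  left_inv := by
    rintro ⟨⟨a, b⟩, hp⟩
    ext i
    · dsimp only
      by_cases h : i ∈ S
      · simp [h]
      · simp only [h, dite_false]
        exact ((hp i h).1).symm
    · dsimp only
      by_cases h : i ∈ S
      · simp [h]
      · simp only [h, dite_false]
        exact ((hp i h).2).symm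
  right_inv := by
    rintro ⟨q1, q2⟩
    ext i <;> simp [i.2]

lemma finrank_suppIn {n : ℕ} (S : Finset (Fin n)) :
    Module.finrank (ZMod 2) (suppIn S) = 2 * S.card := by
  rw [(suppInEquiv S).finrank_eq]
  simp [Module.finrank_prod, Module.finrank_pi]
  ring

lemma sympOrtho_suppIn {n : ℕ} {A B : Finset (Fin n)} (hdisj : Disjoint A B)
    (hunion : A ∪ B = Finset.univ) : sympOrtho (suppIn B) = suppIn A := by
  apply le_antisymm
  · intro x hx i hiA
    have hiB : i ∈ B := by
      have h := Finset.mem_univ i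
      rw [← hunion, Finset.mem_union] at h
      tauto
    constructor
    · have h1 : ((0, Pi.single i 1) : PauliSpace n) ∈ suppIn B := by
        intro j hj
        exact ⟨rfl, Pi.single_eq_of_ne (fun h : j = i => hj (by rw [h]; exact hiB)) 1⟩
      have := hx _ h1
      simpa [sympForm, dotProduct_single] using this
    · have h1 : ((Pi.single i 1, 0) : PauliSpace n) ∈ suppIn B := by
        intro j hj
        exact ⟨Pi.single_eq_of_ne (fun h : j = i => hj (by rw [h]; exact hiB)) 1, rfl⟩
      have := hx _ h1
      simpa [sympForm, dotProduct_single] using this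
  · intro x hx g hg
    show sympForm x g = 0
    simp only [sympForm, dotProduct]
    rw [Finset.sum_eq_zero, Finset.sum_eq_zero, add_zero]
    · intro j _
      by_cases hj : j ∈ B
      · rw [(hx j (Finset.disjoint_right.mp hdisj hj)).2, zero_mul]
      · rw [(hg j hj).1, mul_zero]
    · intro j _
      by_cases hj : j ∈ B
      · rw [(hx j (Finset.disjoint_right.mp hdisj hj)).1, zero_mul]
      · rw [(hg j hj).2, mul_zero]

lemma exists_compl_in {K V : Type*} [Field K] [AddCommGroup V] [Module K V]
    [FiniteDimensional K V] (G W : Submodule K V) (hWG : W ≤ G) :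
    ∃ G' : Submodule K V, G' ≤ G ∧ Disjoint W G' ∧ W ⊔ G' = G ∧
      Module.finrank K W + Module.finrank K G' = Module.finrank K G := by
  obtain ⟨C, hC⟩ := Submodule.exists_isCompl (W.comap G.subtype)
  have hmap : (W.comap G.subtype).map G.subtype = W := by
    rw [Submodule.map_comap_subtype, inf_eq_right.mpr hWG]
  have hd : Disjoint W (C.map G.subtype) := by
    rw [disjoint_iff, ← hmap, ← Submodule.map_inf _ G.injective_subtype,
      disjoint_iff.mp hC.disjoint, Submodule.map_bot]
  have hs : W ⊔ C.map G.subtype = G := by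
    rw [← hmap, ← Submodule.map_sup, codisjoint_iff.mp hC.codisjoint,
      Submodule.map_subtype_top]
  refine ⟨C.map G.subtype, Submodule.map_subtype_le G C, hd, hs, ?_⟩
  rw [← Submodule.finrank_sup_add_finrank_inf_eq, hs, disjoint_iff.mp hd,
    finrank_bot, add_zero]

theorem statement_1 {n : ℕ} (A B : Finset (Fin n)) (hdisj : Disjoint A B)
    (hunion : A ∪ B = Finset.univ) (G : Submodule (ZMod 2) (PauliSpace n)) :
    ∃ G' : Submodule (ZMod 2) (PauliSpace n), G' ≤ G ∧
      Disjoint (G ⊓ suppIn A) (G ⊓ suppIn B) ∧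
      Disjoint ((G ⊓ suppIn A) ⊔ (G ⊓ suppIn B)) G' ∧
      (G ⊓ suppIn A) ⊔ (G ⊓ suppIn B) ⊔ G' = G ∧
      Module.finrank (ZMod 2) (sympOrtho G ⊓ suppIn A : Submodule (ZMod 2) (PauliSpace n))
        + Module.finrank (ZMod 2) (G ⊓ suppIn A : Submodule (ZMod 2) (PauliSpace n))
        + Module.finrank (ZMod 2) G' = 2 * A.card ∧
      Module.finrank (ZMod 2) (sympOrtho G ⊓ suppIn B : Submodule (ZMod 2) (PauliSpace n))
        + Module.finrank (ZMod 2) (G ⊓ suppIn B : Submodule (ZMod 2) (PauliSpace n))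
        + Module.finrank (ZMod 2) G' = 2 * B.card := by
  have hABbot : suppIn A ⊓ suppIn B = (⊥ : Submodule (ZMod 2) (PauliSpace n)) := by
    rw [Submodule.eq_bot_iff]
    rintro x ⟨hxA, hxB⟩
    have : (x.1, x.2) = ((0 : Fin n → ZMod 2), (0 : Fin n → ZMod 2)) := by
      refine Prod.ext ?_ ?_ <;> funext i <;> by_cases h : i ∈ A
      · exact (hxB i (Finset.disjoint_left.mp hdisj h)).1
      · exact (hxA i h).1
      · exact (hxB i (Finset.disjoint_left.mp hdisj h)).2
      · exact (hxA i h).2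
    exact Prod.ext (congrArg Prod.fst this) (congrArg Prod.snd this)
  have hdisjG : Disjoint (G ⊓ suppIn A) (G ⊓ suppIn B) :=
    Disjoint.mono inf_le_right inf_le_right (disjoint_iff.mpr hABbot)
  obtain ⟨G', hG'le, hG'disj, hG'sup, hG'rank⟩ :=
    exists_compl_in G ((G ⊓ suppIn A) ⊔ (G ⊓ suppIn B)) (sup_le inf_le_left inf_le_left)
  refine ⟨G', hG'le, hdisjG, hG'disj, hG'sup, ?_, ?_⟩ <;>
  · have e1 : Module.finrank (ZMod 2) (G ⊔ suppIn B : Submodule (ZMod 2) (PauliSpace n))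
        + Module.finrank (ZMod 2) (sympOrtho G ⊓ suppIn A : Submodule (ZMod 2) (PauliSpace n))
        = 2 * n := by
      have h := finrank_add_finrank_sympOrtho (G ⊔ suppIn B)
      rwa [sympOrtho_sup, sympOrtho_suppIn hdisj hunion] at h
    have e1' : Module.finrank (ZMod 2) (G ⊔ suppIn A : Submodule (ZMod 2) (PauliSpace n))
        + Module.finrank (ZMod 2) (sympOrtho G ⊓ suppIn B : Submodule (ZMod 2) (PauliSpace n))
        = 2 * n := by
      have h := finrank_add_finrank_sympOrtho (G ⊔ suppIn A)
      rwa [sympOrtho_sup, sympOrtho_suppIn hdisj.symm (by rw [Finset.union_comm]; exact hunion)]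
        at h
    have e2 := Submodule.finrank_sup_add_finrank_inf_eq G (suppIn B)
    have e2' := Submodule.finrank_sup_add_finrank_inf_eq G (suppIn A)
    have e3 := finrank_suppIn A
    have e3' := finrank_suppIn B
    have e4 : Module.finrank (ZMod 2)
        (((G ⊓ suppIn A) ⊔ (G ⊓ suppIn B)) : Submodule (ZMod 2) (PauliSpace n))
        = Module.finrank (ZMod 2) (G ⊓ suppIn A : Submodule (ZMod 2) (PauliSpace n))
          + Module.finrank (ZMod 2) (G ⊓ suppIn B : Submodule (ZMod 2) (PauliSpace n)) := by
      have h := Submodule.finrank_sup_add_finrank_inf_eq (G ⊓ suppIn A) (G ⊓ suppIn B)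
      rwa [disjoint_iff.mp hdisjG, finrank_bot, add_zero] at h
    have e5 : A.card + B.card = n := by
      rw [← Finset.card_union_of_disjoint hdisj, hunion, Finset.card_univ, Fintype.card_fin]
    omega
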